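/- For all integers c ≥ 5, the total genus satisfies the recurrence g(c) = g(c−1) + 2·g(c−2) + t(c−2) + t(c−3). -/
import Mathlib


open Finset

def Salt (k m : ℕ) : ℤ := ∑ n ∈ Finset.range m, (-1 : ℤ) ^ n * (Nat.choose (n + k) n)

lemma Salt_succ (k m : ℕ) :
    Salt k (m + 1) = Salt k m + (-1 : ℤ) ^ m * (Nat.choose (m + k) m) :=
  Finset.sum_range_succ _ m

lemma pascal2 (a b : ℕ) :
    (a + 2).choose (b + 2) + a.choose b = a.choose (b + 2) + 2 * (a + 1).choose (b + 1) := by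
  have h1 : (a + 2).choose (b + 2) = (a + 1).choose (b + 1) + (a + 1).choose (b + 2) :=
    Nat.choose_succ_succ _ _
  have h2 : (a + 1).choose (b + 2) = a.choose (b + 1) + a.choose (b + 2) :=
    Nat.choose_succ_succ _ _
  have h3 : (a + 1).choose (b + 1) = a.choose b + a.choose (b + 1) :=
    Nat.choose_succ_succ _ _
  omega

lemma key_aux (j m : ℕ) :
    Salt (j + 2) (m + 2) + 2 * Salt (j + 2) (m + 1) + Salt (j + 2) m = Salt j (m + 2) := by
  induction m with
  | zero => simp [Salt, Finset.sum_range_succ, Nat.choose_one_right]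
  | succ m ih =>
    have h1 := Salt_succ (j + 2) (m + 2)
    have h2 := Salt_succ (j + 2) (m + 1)
    have hr := Salt_succ j (m + 2)
    rw [show m + 2 + (j + 2) = m + j + 4 from by omega] at h1
    rw [show m + 1 + (j + 2) = m + j + 3 from by omega] at h2
    rw [show m + 2 + j = m + j + 2 from by omega] at hr
    have hp := pascal2 (m + j + 2) m
    rw [show m + j + 2 + 2 = m + j + 4 from by omega,
        show m + j + 2 + 1 = m + j + 3 from by omega] at hp
    have hpz : ((m + j + 4).choose (m + 2) : ℤ) + (m + j + 2).choose m
        = (m + j + 2).choose (m + 2) + 2 * (m + j + 3).choose (m + 1) := by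
      exact_mod_cast hp
    have hS := Salt_succ (j + 2) m
    rw [show m + (j + 2) = m + j + 2 from by omega] at hS
    linear_combination ih + h1 + 2 * h2 + hS - hr + (-1 : ℤ) ^ m * hpz

lemma key1_aux (m : ℕ) :
    Salt 1 (m + 2) + 2 * Salt 1 (m + 1) + Salt 1 m = 1 := by
  induction m with
  | zero => simp [Salt, Finset.sum_range_succ, Nat.choose_one_right]
  | succ m ih =>
    have h1 := Salt_succ 1 (m + 2)
    have h2 := Salt_succ 1 (m + 1)
    have h3 := Salt_succ 1 m
    rw [show m + 2 + 1 = m + 3 from rfl, Nat.choose_succ_self_right] at h1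
    rw [show m + 1 + 1 = m + 2 from rfl, Nat.choose_succ_self_right] at h2
    rw [Nat.choose_succ_self_right] at h3
    push_cast at h1 h2 h3
    linear_combination ih + h1 + 2 * h2 + h3

/-- `tKnot c g` is t(c,g), the number of words in the partially double counted set T(c)
representing 2-bridge knots of crossing number `c` and genus `g`, given by the explicit
formula t(c,g) = (-1)^(c-1) * Σ_{n=0}^{c-2g-1} (-1)^n * binom(n+2g-1, n), the sum being
empty when c - 2g - 1 < 0, and t(c,0) = 0. -/
def tKnot (c g : ℕ) : ℤ :=
  if g = 0 then 0
  else (-1 : ℤ) ^ (c - 1) *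
    ∑ n ∈ Finset.range (c - 2 * g), (-1 : ℤ) ^ n * (Nat.choose (n + 2 * g - 1) n)

/-- `tTotal c` is t(c) = Σ_{g=1}^{⌊(c−1)/2⌋} t(c,g), the number of words in T(c). -/
def tTotal (c : ℕ) : ℤ := ∑ g ∈ Finset.Icc 1 ((c - 1) / 2), tKnot c g

/-- `gTotal c` is the total genus g(c) = Σ_{i=1}^{⌊(c−1)/2⌋} i·t(c,i) of T(c). -/
def gTotal (c : ℕ) : ℤ := ∑ i ∈ Finset.Icc 1 ((c - 1) / 2), (i : ℤ) * tKnot c i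

lemma key' (j m : ℕ) :
    Salt (j + 2) m + 2 * Salt (j + 2) (m - 1) + Salt (j + 2) (m - 2) = Salt j m := by
  match m with
  | 0 => simp [Salt]
  | 1 => simp [Salt, Finset.sum_range_one]
  | (m + 2) => exact key_aux j m

lemma tKnot_zero (c : ℕ) : tKnot c 0 = 0 := if_pos rfl

lemma tKnot_eq (c g : ℕ) (hg : 1 ≤ g) :
    tKnot c g = (-1 : ℤ) ^ (c - 1) * Salt (2 * g - 1) (c - 2 * g) := by
  unfold tKnot Salt
  rw [if_neg (by omega : ¬ g = 0)]
  congr 1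
  exact Finset.sum_congr rfl fun n _ => by
    rw [show n + 2 * g - 1 = n + (2 * g - 1) from by omega]

lemma tKnot_zero_of_le (c g : ℕ) (h : c ≤ 2 * g) : tKnot c g = 0 := by
  unfold tKnot
  rcases eq_or_ne g 0 with rfl | h0
  · simp
  · rw [if_neg h0, Nat.sub_eq_zero_of_le h]
    simp

lemma tKnot_rec (c g : ℕ) (hc : 4 ≤ c) (hg : 1 ≤ g) :
    tKnot c g = 2 * tKnot (c - 1) g - tKnot (c - 2) g + tKnot (c - 2) (g - 1)
      + (if g = 1 then (-1 : ℤ) ^ (c - 1) else 0) := by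
  obtain ⟨d, rfl⟩ : ∃ d, c = d + 4 := ⟨c - 4, by omega⟩
  rw [show d + 4 - 1 = d + 3 from by omega, show d + 4 - 2 = d + 2 from by omega]
  rcases eq_or_ne g 1 with rfl | hg1
  · rw [if_pos rfl]
    rw [tKnot_eq _ 1 le_rfl, tKnot_eq _ 1 le_rfl, tKnot_eq _ 1 le_rfl]
    rw [show (1 : ℕ) - 1 = 0 from rfl, tKnot_zero]
    rw [show d + 4 - 2 * 1 = d + 2 from by omega, show d + 3 - 2 * 1 = d + 1 from by omega,
        show d + 2 - 2 * 1 = d from by omega, show 2 * 1 - 1 = 1 from rfl,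
        show d + 3 - 1 = d + 2 from by omega, show d + 2 - 1 = d + 1 from by omega]
    rw [show d + 4 - 1 = d + 3 from by omega]
    linear_combination ((-1 : ℤ) ^ (d + 3)) * key1_aux d
  · obtain ⟨h, rfl⟩ : ∃ h, g = h + 2 := ⟨g - 2, by omega⟩
    rw [if_neg (by omega)]
    rw [tKnot_eq _ (h + 2) (by omega), tKnot_eq _ (h + 2) (by omega),
        tKnot_eq _ (h + 2) (by omega), show h + 2 - 1 = h + 1 from by omega,
        tKnot_eq _ (h + 1) (by omega)]
    rw [show 2 * (h + 2) - 1 = (2 * h + 1) + 2 from by omega,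
        show 2 * (h + 1) - 1 = 2 * h + 1 from by omega,
        show d + 4 - 2 * (h + 2) = d - 2 * h from by omega,
        show d + 3 - 2 * (h + 2) = d - 2 * h - 1 from by omega,
        show d + 2 - 2 * (h + 2) = d - 2 * h - 2 from by omega,
        show d + 2 - 2 * (h + 1) = d - 2 * h from by omega,
        show d + 3 - 1 = d + 2 from by omega, show d + 2 - 1 = d + 1 from by omega]
    rw [show d + 4 - 1 = d + 3 from by omega]
    linear_combination ((-1 : ℤ) ^ (d + 3)) * key' (2 * h + 1) (d - 2 * h)

def Gpart (c N : ℕ) : ℤ := ∑ j ∈ Finset.range N, ((1 + j : ℕ) : ℤ) * tKnot c (1 + j)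

def Tpart (c N : ℕ) : ℤ := ∑ j ∈ Finset.range N, tKnot c (1 + j)

lemma gTotal_eq (c : ℕ) : gTotal c = Gpart c ((c - 1) / 2) := by
  unfold gTotal Gpart
  rw [← Finset.Ico_add_one_right_eq_Icc, Finset.sum_Ico_eq_sum_range]
  rw [show (c - 1) / 2 + 1 - 1 = (c - 1) / 2 from by omega]

lemma tTotal_eq (c : ℕ) : tTotal c = Tpart c ((c - 1) / 2) := by
  unfold tTotal Tpart
  rw [← Finset.Ico_add_one_right_eq_Icc, Finset.sum_Ico_eq_sum_range]
  rw [show (c - 1) / 2 + 1 - 1 = (c - 1) / 2 from by omega]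

lemma Gpart_pad (c N : ℕ) (h : (c - 1) / 2 ≤ N) : Gpart c N = Gpart c ((c - 1) / 2) := by
  unfold Gpart
  refine (Finset.sum_subset (Finset.range_subset_range.2 h) fun j _ hj => ?_).symm
  rw [Finset.mem_range, not_lt] at hj
  rw [tKnot_zero_of_le _ _ (by omega), mul_zero]

lemma Tpart_pad (c N : ℕ) (h : (c - 1) / 2 ≤ N) : Tpart c N = Tpart c ((c - 1) / 2) := by
  unfold Tpart
  refine (Finset.sum_subset (Finset.range_subset_range.2 h) fun j _ hj => ?_).symm
  rw [Finset.mem_range, not_lt] at hj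
  rw [tKnot_zero_of_le _ _ (by omega)]

lemma sum_rec (c L : ℕ) (hc : 4 ≤ c) :
    Gpart c (L + 1) = 2 * Gpart (c - 1) (L + 1) - Gpart (c - 2) (L + 1)
      + (Gpart (c - 2) L + Tpart (c - 2) L) + (-1 : ℤ) ^ (c - 1) := by
  have h1 : Gpart c (L + 1) = ∑ j ∈ Finset.range (L + 1),
      (2 * (((1 + j : ℕ) : ℤ) * tKnot (c - 1) (1 + j))
        - ((1 + j : ℕ) : ℤ) * tKnot (c - 2) (1 + j)
        + ((1 + j : ℕ) : ℤ) * tKnot (c - 2) j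
        + (if j = 0 then (-1 : ℤ) ^ (c - 1) else 0)) := by
    refine Finset.sum_congr rfl fun j _ => ?_
    rw [tKnot_rec c (1 + j) hc (by omega), show 1 + j - 1 = j from by omega]
    rcases eq_or_ne j 0 with rfl | hj0
    · norm_num
    · rw [if_neg (by omega), if_neg hj0]; ring
  rw [h1, Finset.sum_add_distrib, Finset.sum_add_distrib, Finset.sum_sub_distrib]
  have e1 : ∑ j ∈ Finset.range (L + 1), 2 * (((1 + j : ℕ) : ℤ) * tKnot (c - 1) (1 + j))
      = 2 * Gpart (c - 1) (L + 1) := by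
    rw [← Finset.mul_sum]; rfl
  have e2 : ∑ j ∈ Finset.range (L + 1), (if j = 0 then (-1 : ℤ) ^ (c - 1) else 0)
      = (-1 : ℤ) ^ (c - 1) := by
    rw [Finset.sum_ite_eq' (Finset.range (L + 1)) 0 (fun _ => (-1 : ℤ) ^ (c - 1))]
    simp
  have e3 : ∑ j ∈ Finset.range (L + 1), ((1 + j : ℕ) : ℤ) * tKnot (c - 2) j
      = Gpart (c - 2) L + Tpart (c - 2) L := by
    rw [Finset.sum_range_succ' (fun j => ((1 + j : ℕ) : ℤ) * tKnot (c - 2) j) L]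
    have e4 : ∑ i ∈ Finset.range L, ((1 + (i + 1) : ℕ) : ℤ) * tKnot (c - 2) (i + 1)
        = ∑ i ∈ Finset.range L,
          (((1 + i : ℕ) : ℤ) * tKnot (c - 2) (1 + i) + tKnot (c - 2) (1 + i)) := by
      refine Finset.sum_congr rfl fun i _ => ?_
      rw [show i + 1 = 1 + i from by omega]
      push_cast
      ring
    rw [e4, Finset.sum_add_distrib, tKnot_zero, mul_zero, add_zero]
    rfl
  rw [e1, e2, e3,
    show (∑ j ∈ Finset.range (L + 1), ((1 + j : ℕ) : ℤ) * tKnot (c - 2) (1 + j))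
      = Gpart (c - 2) (L + 1) from rfl]

lemma gTotal_main (c : ℕ) (hc : 4 ≤ c) :
    gTotal c = 2 * gTotal (c - 1) + tTotal (c - 2) + (-1 : ℤ) ^ (c - 1) := by
  obtain ⟨L, hL⟩ : ∃ L, (c - 1) / 2 = L + 1 := ⟨(c - 1) / 2 - 1, by omega⟩
  have h := sum_rec c L hc
  have p1 : Gpart (c - 1) (L + 1) = gTotal (c - 1) := by
    rw [gTotal_eq (c - 1)]
    exact Gpart_pad (c - 1) (L + 1) (by omega)
  have p2 : Gpart (c - 2) (L + 1) = gTotal (c - 2) := by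
    rw [gTotal_eq (c - 2)]
    exact Gpart_pad (c - 2) (L + 1) (by omega)
  have p3 : Gpart (c - 2) L = gTotal (c - 2) := by
    rw [gTotal_eq (c - 2)]
    exact Gpart_pad (c - 2) L (by omega)
  have p4 : Tpart (c - 2) L = tTotal (c - 2) := by
    rw [tTotal_eq (c - 2)]
    exact Tpart_pad (c - 2) L (by omega)
  rw [gTotal_eq c, hL, h, p1, p2, p3, p4]
  ring

/-- For all integers c ≥ 5, the total genus satisfies
g(c) = g(c−1) + 2·g(c−2) + t(c−2) + t(c−3). -/
theorem gTotal_recurrence (c : ℕ) (hc : 5 ≤ c) :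
    gTotal c = gTotal (c - 1) + 2 * gTotal (c - 2) + tTotal (c - 2) + tTotal (c - 3) := by
  have h1 := gTotal_main c (by omega)
  have h2 := gTotal_main (c - 1) (by omega)
  rw [show c - 1 - 1 = c - 2 from by omega, show c - 1 - 2 = c - 3 from by omega] at h2
  have hs : (-1 : ℤ) ^ (c - 1) = -(-1 : ℤ) ^ (c - 2) := by
    rw [show c - 1 = (c - 2) + 1 from by omega, pow_succ]
    ring
  rw [h1, h2, hs]
  ring
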